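/- Let R be a commutative ring with unity in which every non-Jacobson element is contained in only finitely many maximal ideals. Let k ∈ ℕ and I_0,I_1,…,I_k be (k+1) mutually co-maximal ideals of R; moreover, if exactly one of the I_j (0 ≤ j ≤ k) is a proper ideal, assume additionally that this proper ideal is contained in only finitely many maximal ideals. Let A = [a_{i,j}]_{0≤i,j≤k} be a (k+1)×(k+1) matrix over R such that every row is unital, i.e. (a_{i,0})+(a_{i,1})+⋯+(a_{i,k}) = R for each 0 ≤ i ≤ k. Then there exists B = [b_{i,j}]_{0≤i,j≤k} ∈ SL_{k+1}(R) such that a_{i,j} ≡ b_{i,j} mod I_i for all 0 ≤ i,j ≤ k. -/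

import Mathlib

open Matrix

section Avoid
variable {S : Type*} [CommRing S]

/-- Over a ring with finitely many maximal ideals,
if `span {c} ⊔ K = ⊤` then some `c + x`, `x ∈ K`, is a unit. -/
lemma exists_unit_add (hfin : {M : Ideal S | M.IsMaximal}.Finite)
    (K : Ideal S) (c : S) (h : Ideal.span {c} ⊔ K = ⊤) :
    ∃ x ∈ K, IsUnit (c + x) := by
  classical
  have main : ∀ F : Set (Ideal S), F.Finite → (∀ M ∈ F, M.IsMaximal) →
      ∃ x ∈ K, ∀ M ∈ F, c + x ∉ M := by
    intro F hF
    refine Set.Finite.induction_on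
      (motive := fun F _ => (∀ M ∈ F, M.IsMaximal) → ∃ x ∈ K, ∀ M ∈ F, c + x ∉ M) F hF
      (fun _ => ⟨0, K.zero_mem, by simp⟩) ?_
    intro a s ha hs ih hmax
    obtain ⟨x, hxK, hx⟩ := ih (fun M hM => hmax M (Set.mem_insert_of_mem a hM))
    by_cases hca : c + x ∈ a
    · have hamax : a.IsMaximal := hmax a (Set.mem_insert a s)
      have hKa : ¬ K ≤ a := by
        intro hle
        have hc : c ∈ a := by
          have : (c + x) - x ∈ a := a.sub_mem hca (hle hxK)
          simpa using this
        have : (⊤ : Ideal S) ≤ a := by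
          rw [← h]
          exact sup_le ((Ideal.span_le).2 (by simpa using hc)) hle
        exact hamax.ne_top (top_le_iff.mp this)
      obtain ⟨y, hyK, hya⟩ := SetLike.not_le_iff_exists.mp hKa
      have hinf : ¬ (hs.toFinset.inf id ≤ a) := by
        intro hle
        obtain ⟨M, hM, hMa⟩ := (Ideal.IsPrime.inf_le' hamax.isPrime).mp hle
        have hMs : M ∈ s := hs.mem_toFinset.mp hM
        have hM' : M.IsMaximal := hmax M (Set.mem_insert_of_mem a hMs)
        exact ha (by rwa [hM'.eq_of_le hamax.ne_top hMa] at hMs)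
      obtain ⟨z, hzinf, hza⟩ := SetLike.not_le_iff_exists.mp hinf
      refine ⟨x + y * z, K.add_mem hxK (K.mul_mem_right z hyK), ?_⟩
      intro M hM
      rcases Set.mem_insert_iff.mp hM with rfl | hMs
      · intro hmem
        have : y * z ∈ M := by
          have : (c + (x + y * z)) - (c + x) ∈ M := M.sub_mem hmem hca
          simpa [add_assoc] using this
        rcases (hamax.isPrime.mem_or_mem this) with h' | h'
        · exact hya h'
        · exact hza h'
      · intro hmem
        have hzM : z ∈ M := by
          have : hs.toFinset.inf id ≤ M := Finset.inf_le (hs.mem_toFinset.mpr hMs)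
          exact this hzinf
        have : c + x ∈ M := by
          have h2 : (c + (x + y * z)) - y * z ∈ M := M.sub_mem hmem (M.mul_mem_left y hzM)
          have : c + (x + y * z) - y * z = c + x := by ring
          rwa [this] at h2
        exact hx M hMs this
    · exact ⟨x, hxK, fun M hM => by
        rcases Set.mem_insert_iff.mp hM with rfl | hM'
        · exact hca
        · exact hx M hM'⟩
  obtain ⟨x, hxK, hx⟩ := main _ hfin (fun M hM => hM)
  refine ⟨x, hxK, ?_⟩
  by_contra hu
  obtain ⟨M, hM, hmem⟩ := exists_max_ideal_of_mem_nonunits hu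
  exact hx M hM hmem

end Avoid

section TP
variable {S T : Type*} [CommRing S] [CommRing T] {m : Type*} [Fintype m] [DecidableEq m]

def IsTP (E : Matrix m m S) : Prop :=
  ∃ L : List (Matrix.TransvectionStruct m S), E = (L.map Matrix.TransvectionStruct.toMatrix).prod

lemma IsTP.one : IsTP (1 : Matrix m m S) := ⟨[], rfl⟩

lemma IsTP.mul {E F : Matrix m m S} (hE : IsTP E) (hF : IsTP F) : IsTP (E * F) := by
  obtain ⟨L, rfl⟩ := hE; obtain ⟨L', rfl⟩ := hF
  exact ⟨L ++ L', by simp⟩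

lemma IsTP.transvection {i j : m} (h : i ≠ j) (c : S) : IsTP (Matrix.transvection i j c) :=
  ⟨[⟨i, j, h, c⟩], by simp [Matrix.TransvectionStruct.toMatrix_mk]⟩

lemma IsTP.det {E : Matrix m m S} (hE : IsTP E) : E.det = 1 := by
  obtain ⟨L, rfl⟩ := hE
  induction L with
  | nil => simp
  | cons t L ih => simp [Matrix.det_mul, ih, t.det]

lemma IsTP.exists_inv {E : Matrix m m S} (hE : IsTP E) :
    ∃ F : Matrix m m S, IsTP F ∧ E * F = 1 ∧ F * E = 1 := by
  obtain ⟨L, rfl⟩ := hE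
  exact ⟨(L.reverse.map (Matrix.TransvectionStruct.toMatrix ∘ Matrix.TransvectionStruct.inv)).prod,
    ⟨L.reverse.map Matrix.TransvectionStruct.inv, by simp⟩,
    Matrix.TransvectionStruct.prod_mul_reverse_inv_prod L,
    Matrix.TransvectionStruct.reverse_inv_prod_mul_prod L⟩

lemma vecMul_transvection {i j : m} (hij : i ≠ j) (c : S) (v : m → S) :
    v ᵥ* Matrix.transvection i j c = Function.update v j (v j + v i * c) := by
  funext a
  simp only [Matrix.transvection, Matrix.vecMul_add, Matrix.vecMul_one, Pi.add_apply]
  rw [Matrix.vecMul, Function.update]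
  simp only [dotProduct, Matrix.single]
  by_cases h : a = j
  · subst h
    simp [Finset.sum_ite_eq' Finset.univ i, hij]
  · simp [h, Ne.symm, fun b => show ¬(i = b ∧ j = a) from fun ⟨_, hj⟩ => h hj.symm]

end TP

section Reduce
variable {S : Type*} [CommRing S] {m : Type*} [Fintype m] [DecidableEq m]

omit [Fintype m] in
lemma mem_sum_span (v : m → S) (F : Finset m) (x : S)
    (hx : x ∈ ∑ j ∈ F, Ideal.span {v j}) :
    ∃ t : m → S, x = ∑ j ∈ F, t j * v j := by
  classical
  induction F using Finset.induction_on generalizing x with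
  | empty => exact ⟨0, by simpa using hx⟩
  | @insert j F hj ih =>
    rw [Finset.sum_insert hj, Submodule.add_eq_sup] at hx
    obtain ⟨p, hp, q, hq, rfl⟩ := Submodule.mem_sup.mp hx
    obtain ⟨a, rfl⟩ := Ideal.mem_span_singleton'.mp hp
    obtain ⟨t, rfl⟩ := ih q hq
    refine ⟨Function.update t j a, ?_⟩
    rw [Finset.sum_insert hj, Function.update_self]
    congr 1
    exact Finset.sum_congr rfl fun i hi =>
      by rw [Function.update_of_ne (ne_of_mem_of_not_mem hi hj) a t]

lemma reduce_row (hfin : {M : Ideal S | M.IsMaximal}.Finite)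
    (v : m → S) (hv : ∑ j, Ideal.span {v j} = ⊤)
    (l p : m) (hlp : p ≠ l) :
    ∃ E : Matrix m m S, IsTP E ∧ v ᵥ* E = Pi.single l 1 := by
  classical
  set K : Ideal S := ∑ j ∈ Finset.univ.erase l, Ideal.span {v j} with hK
  have hsup : Ideal.span {v l} ⊔ K = ⊤ := by
    rw [← Submodule.add_eq_sup, hK,
      Finset.add_sum_erase Finset.univ (fun j => Ideal.span {v j}) (Finset.mem_univ l)]
    exact hv
  obtain ⟨x, hxK, hu⟩ := exists_unit_add hfin K (v l) hsup
  obtain ⟨t, rfl⟩ := mem_sum_span v _ x hxK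
  -- Step A : make entry l a unit
  have claimA : ∀ F : Finset m, l ∉ F → ∃ E : Matrix m m S, IsTP E ∧
      v ᵥ* E = Function.update v l (v l + ∑ j ∈ F, t j * v j) := by
    intro F
    induction F using Finset.induction_on with
    | empty => exact fun _ => ⟨1, IsTP.one, by simp [Function.update_eq_self]⟩
    | @insert j F hj ih =>
      intro hl
      have hlF : l ∉ F := fun h => hl (Finset.mem_insert_of_mem h)
      have hjl : j ≠ l := fun h => hl (h ▸ Finset.mem_insert_self j F)
      obtain ⟨E, hE, hvE⟩ := ih hlF
      refine ⟨E * Matrix.transvection j l (t j), hE.mul (IsTP.transvection hjl _), ?_⟩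
      rw [← Matrix.vecMul_vecMul, hvE, vecMul_transvection hjl,
        Function.update_self, Function.update_of_ne hjl, Function.update_idem]
      rw [Finset.sum_insert hj]
      exact congrArg (Function.update v l) (by ring)
  obtain ⟨E₁, hE₁, hvE₁⟩ := claimA (Finset.univ.erase l) (Finset.notMem_erase l _)
  set u : S := v l + ∑ j ∈ Finset.univ.erase l, t j * v j with hu_def
  set w : m → S := Function.update v l u with hw
  obtain ⟨uu, huu⟩ := hu
  -- Step B : clear the other entries
  have hwl : w l = u := Function.update_self l u v
  have claimB : ∀ F : Finset m, l ∉ F → ∃ E : Matrix m m S, IsTP E ∧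
      w ᵥ* E = fun j => if j ∈ F then 0 else w j := by
    intro F
    induction F using Finset.induction_on with
    | empty => exact fun _ => ⟨1, IsTP.one, by simp⟩
    | @insert j₀ F hj₀ ih =>
      intro hl
      have hlF : l ∉ F := fun h => hl (Finset.mem_insert_of_mem h)
      have hlj : l ≠ j₀ := fun h => hl (h ▸ Finset.mem_insert_self j₀ F)
      obtain ⟨E, hE, hvE⟩ := ih hlF
      refine ⟨E * Matrix.transvection l j₀ (-(↑uu⁻¹ * w j₀)), hE.mul (IsTP.transvection hlj _), ?_⟩
      rw [← Matrix.vecMul_vecMul, hvE, vecMul_transvection hlj]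
      funext a
      by_cases haj : a = j₀
      · subst haj
        rw [Function.update_self]
        simp only [if_neg hj₀, if_neg hlF, if_pos (Finset.mem_insert_self a F), hwl]
        have : w a + u * -(↑uu⁻¹ * w a) = w a - (u * ↑uu⁻¹) * w a := by ring
        rw [this, ← huu, Units.mul_inv, one_mul, sub_self]
      · rw [Function.update_of_ne haj]
        by_cases haF : a ∈ F
        · simp [haF, Finset.mem_insert_of_mem haF]
        · simp [haF, haj, Finset.mem_insert]
  obtain ⟨E₂, hE₂, hvE₂⟩ := claimB (Finset.univ.erase l) (Finset.notMem_erase l _)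
  have hsingle : (fun j => if j ∈ Finset.univ.erase l then 0 else w j) = Pi.single l u := by
    funext j
    by_cases hj : j = l
    · subst hj; simp [hwl]
    · simp [hj, Pi.single_eq_of_ne hj]
  -- Step C : normalize the unit to 1
  have hlp' : l ≠ p := fun h => hlp h.symm
  set s0 : m → S := Pi.single l u with hs0
  have c1 : s0 ᵥ* Matrix.transvection l p (↑uu⁻¹ * (1 - u)) =
      Function.update s0 p (1 - u) := by
    rw [vecMul_transvection hlp']
    rw [hs0, Pi.single_eq_of_ne hlp, Pi.single_eq_same, zero_add,
      ← mul_assoc, ← huu, Units.mul_inv, one_mul]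
  set s1 : m → S := Function.update s0 p (1 - u) with hs1
  have c2 : s1 ᵥ* Matrix.transvection p l 1 = Function.update s1 l 1 := by
    rw [vecMul_transvection hlp]
    rw [hs1, Function.update_self, Function.update_of_ne hlp', hs0, Pi.single_eq_same]
    ring_nf
  set s2 : m → S := Function.update s1 l 1 with hs2
  have c3 : s2 ᵥ* Matrix.transvection l p (u - 1) = Pi.single l 1 := by
    rw [vecMul_transvection hlp']
    funext a
    by_cases hap : a = p
    · subst hap
      rw [Function.update_self, hs2, Function.update_of_ne hlp, hs1, Function.update_self,
        Function.update_self, Pi.single_eq_of_ne hlp]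
      ring
    · rw [Function.update_of_ne hap]
      by_cases hal : a = l
      · subst hal
        rw [hs2, Function.update_self, Pi.single_eq_same]
      · rw [hs2, Function.update_of_ne hal, hs1, Function.update_of_ne hap, hs0,
          Pi.single_eq_of_ne hal, Pi.single_eq_of_ne hal]
  refine ⟨E₁ * (E₂ * (Matrix.transvection l p (↑uu⁻¹ * (1 - u)) *
    (Matrix.transvection p l 1 * Matrix.transvection l p (u - 1)))), ?_, ?_⟩
  · exact hE₁.mul (hE₂.mul ((IsTP.transvection hlp' _).mul
      ((IsTP.transvection hlp _).mul (IsTP.transvection hlp' _))))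
  · rw [← Matrix.vecMul_vecMul, ← Matrix.vecMul_vecMul, ← Matrix.vecMul_vecMul,
      ← Matrix.vecMul_vecMul, hvE₁, hvE₂, hsingle, c1, c2, c3]

end Reduce



section Helpers
variable {S T : Type*} [CommRing S] [CommRing T] {m : Type*} [Fintype m] [DecidableEq m]

/-- Map a transvection structure along a ring hom. -/
def tsMap (f : S →+* T) (t : Matrix.TransvectionStruct m S) : Matrix.TransvectionStruct m T :=
  ⟨t.i, t.j, t.hij, f t.c⟩

lemma toMatrix_tsMap (f : S →+* T) (t : Matrix.TransvectionStruct m S) :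
    (tsMap f t).toMatrix = f.mapMatrix t.toMatrix := by
  rcases t with ⟨i, j, h, c⟩
  ext a b
  simp [tsMap, Matrix.TransvectionStruct.toMatrix_mk, Matrix.transvection,
    Matrix.single, Matrix.one_apply, apply_ite f]

lemma quot_max_finite {R : Type*} [CommRing R] {I : Ideal R}
    (h : {M : Ideal R | M.IsMaximal ∧ I ≤ M}.Finite) :
    {M : Ideal (R ⧸ I) | M.IsMaximal}.Finite := by
  have hinj : Function.Injective (Ideal.comap (Ideal.Quotient.mk I) :
      Ideal (R ⧸ I) → Ideal R) :=
    Ideal.comap_injective_of_surjective _ Ideal.Quotient.mk_surjective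
  have hsub : (Ideal.comap (Ideal.Quotient.mk I)) '' {M : Ideal (R ⧸ I) | M.IsMaximal}
      ⊆ {M : Ideal R | M.IsMaximal ∧ I ≤ M} := by
    rintro _ ⟨M, hM, rfl⟩
    refine ⟨Ideal.comap_isMaximal_of_surjective _ Ideal.Quotient.mk_surjective (H := hM), ?_⟩
    intro x hx
    rw [Ideal.mem_comap, Ideal.Quotient.eq_zero_iff_mem.mpr hx]
    exact M.zero_mem
  exact Set.Finite.of_finite_image (h.subset hsub) hinj.injOn

lemma list_prod_map_single {α M : Type*} [Monoid M] (g : α → M) :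
    ∀ (L : List α) (a : α), L.Nodup → a ∈ L → (∀ x ∈ L, x ≠ a → g x = 1) →
    (L.map g).prod = g a := by
  intro L
  induction L with
  | nil => intro a _ ha; simp at ha
  | cons b L ih =>
    intro a hnd ha hone
    have hnd' := List.nodup_cons.mp hnd
    rcases List.mem_cons.mp ha with rfl | haL
    · have h1 : ∀ x ∈ L.map g, x = 1 := by
        intro x hx
        obtain ⟨y, hy, rfl⟩ := List.mem_map.mp hx
        exact hone y (List.mem_cons_of_mem _ hy) (fun h => hnd'.1 (h ▸ hy))
      simp [List.prod_eq_one h1]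
    · have hb : g b = 1 := hone b List.mem_cons_self (fun h => hnd'.1 (h ▸ haL))
      have := ih a hnd'.2 haL (fun x hx hxa => hone x (List.mem_cons_of_mem _ hx) hxa)
      simp [hb, this]

lemma isTP_list_prod' (L : List (Matrix m m S)) (h : ∀ x ∈ L, ∃ L' : List (Matrix.TransvectionStruct m S), x = (L'.map Matrix.TransvectionStruct.toMatrix).prod) :
    ∃ L' : List (Matrix.TransvectionStruct m S), L.prod = (L'.map Matrix.TransvectionStruct.toMatrix).prod := by
  induction L with
  | nil => exact ⟨[], rfl⟩
  | cons a L ih =>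
    obtain ⟨La, ha⟩ := h a List.mem_cons_self
    obtain ⟨LL, hLL⟩ := ih (fun x hx => h x (List.mem_cons_of_mem _ hx))
    exact ⟨La ++ LL, by simp [ha, hLL]⟩

lemma ideal_le_sum {ι : Type*} [DecidableEq ι] (F : Finset ι) (f : ι → Ideal S) {j : ι}
    (hj : j ∈ F) : f j ≤ ∑ i ∈ F, f i := by
  induction F using Finset.induction_on with
  | empty => simp at hj
  | @insert a F ha ih =>
    rw [Finset.sum_insert ha, Submodule.add_eq_sup]
    rcases Finset.mem_insert.mp hj with rfl | h
    · exact le_sup_left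
    · exact (ih h).trans le_sup_right

lemma single_one_vecMul (l : m) (M : Matrix m m S) :
    Pi.single l (1 : S) ᵥ* M = M l := by
  funext j
  simp [Matrix.vecMul, dotProduct, Pi.single_apply]

end Helpers

/-- Let `R` be a commutative ring with unity in which every non-Jacobson
element is contained in only finitely many maximal ideals. Let `I_0, …, I_k` be `k+1`
mutually co-maximal ideals; if exactly one `I_j` is proper, assume moreover that this
proper ideal is contained in only finitely many maximal ideals. If `A = [a_{i,j}]` is a
`(k+1)×(k+1)` matrix over `R` all of whose rows are unital, then there exists
`B = [b_{i,j}] ∈ SL_{k+1}(R)` with `a_{i,j} ≡ b_{i,j} mod I_i` for all `i, j`. -/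
theorem sl_lift_of_unital_rows {R : Type*} [CommRing R]
    (hnj : ∀ x : R, (∃ M : Ideal R, M.IsMaximal ∧ x ∉ M) →
      {M : Ideal R | M.IsMaximal ∧ x ∈ M}.Finite)
    (k : ℕ) (hk : 0 < k)
    (I : Fin (k + 1) → Ideal R)
    (hcomax : ∀ i j, i ≠ j → I i + I j = ⊤)
    (hone : ∀ j, I j ≠ ⊤ → (∀ i, i ≠ j → I i = ⊤) →
      {M : Ideal R | M.IsMaximal ∧ I j ≤ M}.Finite)
    (A : Matrix (Fin (k + 1)) (Fin (k + 1)) R)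
    (hrow : ∀ i, ∑ j, Ideal.span {A i j} = ⊤) :
    ∃ B : Matrix.SpecialLinearGroup (Fin (k + 1)) R,
      ∀ i j, A i j - B.1 i j ∈ I i := by
  classical
  -- pairwise coprime
  have hcop : Pairwise (Function.onFun IsCoprime I) := by
    intro i j hij
    rw [Function.onFun, Ideal.isCoprime_iff_add, hcomax i j hij, Ideal.one_eq_top]
  -- CRT surjectivity
  have surj : ∀ g : ∀ i, R ⧸ I i, ∃ r : R, ∀ i, Ideal.Quotient.mk (I i) r = g i := by
    intro g
    obtain ⟨q, hq⟩ := Ideal.quotientInfToPiQuotient_surj hcop g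
    obtain ⟨r, rfl⟩ := Ideal.Quotient.mk_surjective q
    exact ⟨r, fun i => by rw [← hq]; exact (Ideal.quotientInfToPiQuotient_mk' I r i).symm⟩
  -- every proper I l lies in finitely many maximal ideals
  have hfinI : ∀ l, I l ≠ ⊤ → {M : Ideal R | M.IsMaximal ∧ I l ≤ M}.Finite := by
    intro l hl
    by_cases hex : ∃ i, i ≠ l ∧ I i ≠ ⊤
    · obtain ⟨i, hil, hi⟩ := hex
      have h1 : (1 : R) ∈ I i ⊔ I l := by
        rw [← Submodule.add_eq_sup, hcomax i l hil]; trivial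
      obtain ⟨z, hz, y, hy, hzy⟩ := Submodule.mem_sup.mp h1
      obtain ⟨M, hMmax, hIM⟩ := Ideal.exists_le_maximal (I i) hi
      have hyM : y ∉ M := by
        intro hyM
        exact hMmax.ne_top ((Ideal.eq_top_iff_one M).mpr (hzy ▸ M.add_mem (hIM hz) hyM))
      exact (hnj y ⟨M, hMmax, hyM⟩).subset (fun N hN => ⟨hN.1, hN.2 hy⟩)
    · push_neg at hex
      exact hone l hl (fun i hil => hex i hil)
  -- each quotient has finitely many maximal ideals
  have hfinQ : ∀ l, {M : Ideal (R ⧸ I l) | M.IsMaximal}.Finite := by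
    intro l
    by_cases hl : I l = ⊤
    · refine Set.finite_empty.subset ?_
      rintro M hM
      exfalso
      have hsub : Subsingleton (R ⧸ I l) := by
        rw [hl] at *
        exact ⟨fun a b => by
          obtain ⟨x, rfl⟩ := Ideal.Quotient.mk_surjective a
          obtain ⟨y, rfl⟩ := Ideal.Quotient.mk_surjective b
          exact Ideal.Quotient.eq.mpr trivial⟩
      have : M = ⊤ := by
        ext x
        have : x = 0 := Subsingleton.elim x 0
        simp [this]
      exact hM.ne_top this
    · exact quot_max_finite (hfinI l hl)
  -- unimodular rows in the quotients
  have hv : ∀ l, ∑ j, Ideal.span {Ideal.Quotient.mk (I l) (A l j)} = ⊤ := by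
    intro l
    rw [Ideal.eq_top_iff_one]
    obtain ⟨t, ht⟩ := mem_sum_span (fun j => A l j) Finset.univ 1
      (by rw [hrow l]; trivial)
    have he : (1 : R ⧸ I l) =
        ∑ j, Ideal.Quotient.mk (I l) (t j) * Ideal.Quotient.mk (I l) (A l j) := by
      rw [← map_one (Ideal.Quotient.mk (I l)), ht, map_sum]
      simp [_root_.map_mul]
    rw [he]
    exact Ideal.sum_mem _ (fun j _ => ideal_le_sum Finset.univ _ (Finset.mem_univ j)
      (Ideal.mul_mem_left _ _ (Ideal.mem_span_singleton_self _)))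
  -- an auxiliary index different from l
  have h10 : (1 : Fin (k+1)) ≠ 0 := by
    apply Fin.ne_of_val_ne
    rw [Fin.val_one', Nat.mod_eq_of_lt (by omega : 1 < k + 1), Fin.val_zero]
    omega
  have hp : ∀ l : Fin (k+1), (if l = 0 then 1 else 0 : Fin (k+1)) ≠ l := by
    intro l
    by_cases h : l = 0
    · subst h; simpa using h10
    · simpa [h] using fun hh => h hh.symm
  -- reduce each quotient row
  have main : ∀ l : Fin (k+1), ∃ L : List (Matrix.TransvectionStruct (Fin (k+1)) (R ⧸ I l)),
      ∀ j, Ideal.Quotient.mk (I l) (A l j) =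
        ((L.map Matrix.TransvectionStruct.toMatrix).prod) l j := by
    intro l
    obtain ⟨E, hE, hvE⟩ := reduce_row (hfinQ l) (fun j => Ideal.Quotient.mk (I l) (A l j))
      (hv l) l _ (hp l)
    obtain ⟨F, hF, hEF, hFE⟩ := hE.exists_inv
    obtain ⟨LF, rfl⟩ := hF
    refine ⟨LF, fun j => ?_⟩
    have h2 : (fun j => Ideal.Quotient.mk (I l) (A l j)) =
        Pi.single l 1 ᵥ* (LF.map Matrix.TransvectionStruct.toMatrix).prod := by
      conv_lhs => rw [← Matrix.vecMul_one (fun j => Ideal.Quotient.mk (I l) (A l j)),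
        ← hEF, ← Matrix.vecMul_vecMul, hvE]
    exact (congrFun h2 j).trans (congrFun (_root_.single_one_vecMul l _) j)
  choose L hL using main
  -- lift the transvections to R
  let lift : ∀ l, Matrix.TransvectionStruct (Fin (k+1)) (R ⧸ I l) →
      Matrix.TransvectionStruct (Fin (k+1)) R :=
    fun l t => ⟨t.i, t.j, t.hij, (surj (Pi.single l t.c)).choose⟩
  have hlift : ∀ l t m', Ideal.Quotient.mk (I m') ((lift l t).c) = Pi.single (M := fun i => R ⧸ I i) l t.c m' := by
    intro l t m'
    show Ideal.Quotient.mk (I m') ((surj (Pi.single l t.c)).choose) = Pi.single (M := fun i => R ⧸ I i) l t.c m'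
    exact (surj (Pi.single l t.c)).choose_spec m'
  set Bl : Fin (k+1) → Matrix (Fin (k+1)) (Fin (k+1)) R :=
    fun l => (((L l).map (lift l)).map Matrix.TransvectionStruct.toMatrix).prod with hBl
  set B : Matrix (Fin (k+1)) (Fin (k+1)) R := ((List.finRange (k+1)).map Bl).prod with hB
  obtain ⟨LL, hLL⟩ := isTP_list_prod' ((List.finRange (k+1)).map Bl) (by
    rintro x hx
    obtain ⟨l, _, rfl⟩ := List.mem_map.mp hx
    exact ⟨(L l).map (lift l), rfl⟩)
  have hdet : B.det = 1 := IsTP.det ⟨LL, hLL⟩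
  -- the key congruence: reducing B mod I m' gives the m'-th reduction matrix
  have key : ∀ m' : Fin (k+1), (Ideal.Quotient.mk (I m')).mapMatrix B =
      ((L m').map Matrix.TransvectionStruct.toMatrix).prod := by
    intro m'
    have step : ∀ l, (Ideal.Quotient.mk (I m')).mapMatrix (Bl l) =
        (((L l).map (fun t => tsMap (Ideal.Quotient.mk (I m')) (lift l t))).map
          Matrix.TransvectionStruct.toMatrix).prod := by
      intro l
      rw [hBl, map_list_prod]
      simp only [List.map_map]
      exact congrArg List.prod (List.map_congr_left (fun t _ =>
        (toMatrix_tsMap (Ideal.Quotient.mk (I m')) (lift l t)).symm))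
    have hg : ∀ l ∈ List.finRange (k+1), l ≠ m' →
        (Ideal.Quotient.mk (I m')).mapMatrix (Bl l) = 1 := by
      intro l _ hlm
      rw [step l]
      apply List.prod_eq_one
      intro x hx
      simp only [List.map_map] at hx
      obtain ⟨t, _, rfl⟩ := List.mem_map.mp hx
      rcases t with ⟨i, j, hij, c⟩
      simp only [Function.comp_apply, tsMap]
      have hc : Ideal.Quotient.mk (I m') ((lift l ⟨i, j, hij, c⟩).c) = 0 := by
        rw [hlift l ⟨i, j, hij, c⟩ m']
        exact Pi.single_eq_of_ne (M := fun i => R ⧸ I i) (Ne.symm hlm) c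
      rw [hc, Matrix.TransvectionStruct.toMatrix_mk, Matrix.transvection_zero]
    calc (Ideal.Quotient.mk (I m')).mapMatrix B
        = (List.map (fun l => (Ideal.Quotient.mk (I m')).mapMatrix (Bl l))
            (List.finRange (k+1))).prod := by
          rw [hB, map_list_prod, List.map_map]
          rfl
      _ = (Ideal.Quotient.mk (I m')).mapMatrix (Bl m') :=
          list_prod_map_single _ (List.finRange (k+1)) m'
            (List.nodup_finRange _) (List.mem_finRange m') hg
      _ = ((L m').map Matrix.TransvectionStruct.toMatrix).prod := by
          rw [step m']
          congr 1
          simp only [List.map_map]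
          refine List.map_congr_left (fun t _ => ?_)
          have htt : tsMap (Ideal.Quotient.mk (I m')) (lift m' t) = t := by
            rcases t with ⟨i, j, hij, c⟩
            simp only [tsMap]
            congr 1
            rw [hlift m' ⟨i, j, hij, c⟩ m']
            exact Pi.single_eq_same (M := fun i => R ⧸ I i) m' c
          simp only [Function.comp_apply, htt]
  -- conclusion
  have concl : ∀ i j : Fin (k+1), A i j - B i j ∈ I i := by
    intro i j
    rw [← Ideal.Quotient.eq, hL i j]
    have h2 := congrFun (congrFun (key i) i) j
    rw [← h2, RingHom.mapMatrix_apply, Matrix.map_apply]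
  exact ⟨⟨B, hdet⟩, concl⟩
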